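/- For all real numbers x, y with 0 ≤ y < x ≤ 2, one has (sinh(x) − sinh(y)) / sinh(x − y) ≤ exp(xy/2). -/

import Mathlib

open Real

private lemma sinh_le_mul_cosh (t : ℝ) (ht : 0 ≤ t) : Real.sinh t ≤ t * Real.cosh t := by
  have h : MonotoneOn (fun t : ℝ => t * Real.cosh t - Real.sinh t) (Set.Ici 0) := by
    apply monotoneOn_of_deriv_nonneg (convex_Ici 0)
    · fun_prop
    · apply Differentiable.differentiableOn; fun_prop
    · intro s hs
      have hd : HasDerivAt (fun t : ℝ => t * Real.cosh t - Real.sinh t)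
          (1 * Real.cosh s + s * Real.sinh s - Real.cosh s) s := by
        exact ((hasDerivAt_id s).mul (Real.hasDerivAt_cosh s)).sub (Real.hasDerivAt_sinh s)
      rw [hd.deriv]
      have hs' : 0 ≤ s := le_of_lt (by simpa using hs)
      have := Real.sinh_nonneg_iff.2 hs'
      nlinarith
  have := h (Set.self_mem_Ici) (Set.mem_Ici.2 ht) ht
  simpa using this

private lemma key_anti : AntitoneOn (fun t : ℝ => Real.exp (-(t^2)/2) * Real.cosh t)
    (Set.Ici 0) := by
  apply antitoneOn_of_deriv_nonpos (convex_Ici 0)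
  · fun_prop
  · apply Differentiable.differentiableOn; fun_prop
  · intro s hs
    have h1 : HasDerivAt (fun t : ℝ => -(t^2)/2) (-(2*s^1)/2) s :=
      ((hasDerivAt_pow 2 s).neg).div_const 2
    have hd := h1.exp.mul (Real.hasDerivAt_cosh s)
    rw [HasDerivAt.deriv (f := fun t : ℝ => Real.exp (-(t^2)/2) * Real.cosh t) hd]
    have hs' : 0 ≤ s := le_of_lt (by simpa using hs)
    have h2 := sinh_le_mul_cosh s hs'
    have h3 : (0:ℝ) < Real.exp (-(s^2)/2) := Real.exp_pos _
    nlinarith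

theorem sinh_ratio_le_exp (x y : ℝ) (hy : 0 ≤ y) (hyx : y < x) (hx : x ≤ 2) :
    (Real.sinh x - Real.sinh y) / Real.sinh (x - y) ≤ Real.exp (x * y / 2) := by
  set a := (x + y) / 2 with ha
  set b := (x - y) / 2 with hb
  have hb0 : 0 < b := by simp [hb]; linarith
  have hba : b ≤ a := by simp [ha, hb]; linarith
  have hsb : 0 < Real.sinh b := Real.sinh_pos_iff.2 hb0
  have hnum : Real.sinh x - Real.sinh y = 2 * Real.cosh a * Real.sinh b := by
    have hx' : x = a + b := by rw [ha, hb]; ring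
    have hy' : y = a - b := by rw [ha, hb]; ring
    rw [hx', hy', Real.sinh_add, Real.sinh_sub]; ring
  have hden : Real.sinh (x - y) = 2 * Real.sinh b * Real.cosh b := by
    have : x - y = 2 * b := by rw [hb]; ring
    rw [this, Real.sinh_two_mul]
  have hcb : 0 < Real.cosh b := Real.cosh_pos b
  rw [hnum, hden]
  rw [div_le_iff₀ (by positivity)]
  -- need: 2 * cosh a * sinh b ≤ exp (x*y/2) * (2 * sinh b * cosh b)
  have hkey := key_anti (Set.mem_Ici.2 hb0.le) (Set.mem_Ici.2 (hb0.le.trans hba)) hba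
  simp only at hkey
  -- exp(-(a^2)/2) * cosh a ≤ exp(-(b^2)/2) * cosh b
  have hxy : x * y / 2 = a^2/2 - b^2/2 := by rw [ha, hb]; ring
  rw [hxy]
  have hea : (0:ℝ) < Real.exp (-(a^2)/2) := Real.exp_pos _
  have h5 : Real.cosh a ≤ Real.exp (a^2/2 - b^2/2) * Real.cosh b := by
    have := mul_le_mul_of_nonneg_left hkey (le_of_lt (Real.exp_pos (a^2/2)))
    calc Real.cosh a = Real.exp (a^2/2) * (Real.exp (-(a^2)/2) * Real.cosh a) := by
          rw [← mul_assoc, ← Real.exp_add]; ring_nf; simp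
      _ ≤ Real.exp (a^2/2) * (Real.exp (-(b^2)/2) * Real.cosh b) := this
      _ = Real.exp (a^2/2 - b^2/2) * Real.cosh b := by
          rw [← mul_assoc, ← Real.exp_add]; ring_nf
  nlinarith
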